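/- Let C₃ = ⟨ω⟩ be the cyclic group of order 3 and let (ℤ/2ℤ)[C₃] be its group ring over the field with two elements, with [ω^k] denoting the image of ω^k. Then in the power series ring (ℤ/2ℤ)[C₃]⟦t⟧, (1 + t)(1 + [ω²]t) · ∑_{n ≥ 0} ( ∑_{0 ≤ i ≤ n, 0 ≤ j ≤ n} [ω^{i+j}] ) t^n = 1; i.e., the φ-Ehrhart series of the unit square over ℤ/2ℤ simplifies to 1/((1+t)(1+ω²t)). -/

import Mathlib

/-- The cyclic group of order 3, with generator `ω`. -/
def ω : Multiplicative (ZMod 3) := Multiplicative.ofAdd 1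

instance : CharP (MonoidAlgebra (ZMod 2) (Multiplicative (ZMod 3))) 2 :=
  charP_of_injective_ringHom (f := MonoidAlgebra.singleOneRingHom)
    (fun a b h => by
      have := congrArg (fun f => f.coeff (1 : Multiplicative (ZMod 3))) h
      simpa [MonoidAlgebra.singleOneRingHom] using this) 2

open Finset PowerSeries in
lemma geom_step1 {R : Type*} [CommRing R] [CharP R 2] (c : R) :
    (1 + PowerSeries.C c * PowerSeries.X) *
      PowerSeries.mk (fun n => ∑ k ∈ range (n + 1), c ^ k) = PowerSeries.mk (fun _ => 1) := by
  ext n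
  rw [add_mul, one_mul, mul_assoc, mul_comm PowerSeries.X, map_add, PowerSeries.coeff_C_mul]
  cases n with
  | zero => simp
  | succ n =>
    rw [PowerSeries.coeff_succ_mul_X]
    simp only [PowerSeries.coeff_mk]
    rw [Finset.sum_range_succ']
    simp only [pow_zero, pow_succ']
    rw [← Finset.mul_sum]
    ring_nf
    rw [CharTwo.two_eq_zero, mul_zero, add_zero]

open Finset PowerSeries in
lemma geom_step2 {R : Type*} [CommRing R] [CharP R 2] :
    (1 + PowerSeries.X) * PowerSeries.mk (fun _ => (1 : R)) = 1 := by
  ext n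
  rw [add_mul, one_mul, mul_comm PowerSeries.X, map_add]
  cases n with
  | zero => simp
  | succ n =>
    rw [PowerSeries.coeff_succ_mul_X]
    simp [CharTwo.add_self_eq_zero]

/-- over `R = ℤ/2ℤ`, the φ-Ehrhart series of the unit square
`[0,1]²` for the homomorphism sending both standard basis vectors to `ω`
satisfies `(1 + t)(1 + ω²t) · ∑_{n≥0} (∑_{0≤i,j≤n} ω^{i+j}) tⁿ = 1` in
`(ℤ/2ℤ)[C₃]⟦t⟧`. -/
theorem phi_Ehrhart_series_unit_square_C3_mod2 :
    (1 + PowerSeries.X) *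
      (1 + PowerSeries.C (R := MonoidAlgebra (ZMod 2) (Multiplicative (ZMod 3)))
        (MonoidAlgebra.of (ZMod 2) (Multiplicative (ZMod 3)) (ω ^ 2)) * PowerSeries.X) *
      PowerSeries.mk (fun n =>
        ∑ i ∈ Finset.range (n + 1), ∑ j ∈ Finset.range (n + 1),
          MonoidAlgebra.of (ZMod 2) (Multiplicative (ZMod 3)) (ω ^ (i + j)))
    = 1 := by
  set a := MonoidAlgebra.of (ZMod 2) (Multiplicative (ZMod 3)) ω with ha
  have key : ∀ n : ℕ, (∑ i ∈ Finset.range (n + 1), ∑ j ∈ Finset.range (n + 1),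
      MonoidAlgebra.of (ZMod 2) (Multiplicative (ZMod 3)) (ω ^ (i + j)))
      = ∑ k ∈ Finset.range (n + 1), (MonoidAlgebra.of (ZMod 2) (Multiplicative (ZMod 3))
        (ω ^ 2)) ^ k := by
    intro n
    have h1 : (∑ i ∈ Finset.range (n + 1), ∑ j ∈ Finset.range (n + 1),
        MonoidAlgebra.of (ZMod 2) (Multiplicative (ZMod 3)) (ω ^ (i + j)))
        = (∑ i ∈ Finset.range (n + 1), a ^ i) ^ 2 := by
      rw [sq, Finset.sum_mul_sum]
      simp only [pow_add, map_mul, map_pow, ha]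
    rw [h1, sum_pow_char]
    refine Finset.sum_congr rfl fun k _ => ?_
    rw [map_pow, ← pow_mul, ← pow_mul, mul_comm]
  simp only [key]
  rw [mul_assoc, geom_step1, geom_step2]
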